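/- In the root system of type B_l realized with orthogonal basis ε_1,...,ε_l with |ε_j|^2 = 1/(2(2l-1)), among the positive roots whose coefficient m_i of α_i (for fixed i < l) is odd, the highest is ε_1 + ε_{i+1}, with squared length 1/(2l-1). -/

import Mathlib

open RealInnerProductSpace

/-- In the root system of type `B_l` with orthogonal basis `ε 1, ..., ε l` of squared
length `1/(2(2l-1))`, simple roots `α j = ε j - ε (j+1)` for `j < l` and `α l = ε l`,
fix `i` with `1 ≤ i < l`.  Among the positive roots whose coefficient of `α i` is
odd — namely `ε a` with `a ≤ i`, and `ε a ± ε b` with `a ≤ i < b` — the highest is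
`ε 1 + ε (i+1)`, and it has squared length `1/(2l-1)`. -/
theorem stmt18 (V : Type*) [NormedAddCommGroup V] [InnerProductSpace ℝ V]
    (l : ℕ) (ε : ℕ → V) (α : ℕ → V)
    (hip : ∀ a b, 1 ≤ a → a ≤ l → 1 ≤ b → b ≤ l →
      ⟪ε a, ε b⟫ = if a = b then 1 / (2 * (2 * (l : ℝ) - 1)) else 0)
    (hα : ∀ j, 1 ≤ j → j < l → α j = ε j - ε (j + 1)) (hαl : α l = ε l)
    (i : ℕ) (hi1 : 1 ≤ i) (hil : i < l) :
    (∀ β : V,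
      ((∃ a, 1 ≤ a ∧ a ≤ i ∧ β = ε a) ∨
        (∃ a b, 1 ≤ a ∧ a ≤ i ∧ i < b ∧ b ≤ l ∧
          (β = ε a - ε b ∨ β = ε a + ε b))) →
      ∃ c : ℕ → ℕ,
        (ε 1 + ε (i + 1)) - β = ∑ k ∈ Finset.Icc 1 l, (c k : ℝ) • α k) ∧
    ⟪ε 1 + ε (i + 1), ε 1 + ε (i + 1)⟫ = 1 / (2 * (l : ℝ) - 1) := by
  -- telescoping: ε a = ∑_{k=a}^{l} α k
  have tele : ∀ d a, 1 ≤ a → a + d = l → ε a = ∑ k ∈ Finset.Icc a l, α k := by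
    intro d
    induction d with
    | zero =>
      intro a ha hal
      simp only [Nat.add_zero] at hal
      subst hal
      simp [hαl]
    | succ n ih =>
      intro a ha hal
      have hal' : a < l := by omega
      have h1 : Finset.Icc a l = insert a (Finset.Icc (a + 1) l) := by
        ext k
        simp only [Finset.mem_Icc, Finset.mem_insert]
        omega
      rw [h1, Finset.sum_insert (by simp), ← ih (a + 1) (by omega) (by omega),
        hα a ha hal']
      abel
  have key : ∀ a, 1 ≤ a → a ≤ l →
      ε a = ∑ k ∈ Finset.Icc 1 l, (if a ≤ k then (1 : ℝ) else 0) • α k := by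
    intro a ha hal
    rw [tele (l - a) a ha (by omega)]
    have hfil : Finset.Icc a l = (Finset.Icc 1 l).filter (fun k => a ≤ k) := by
      ext k
      simp only [Finset.mem_filter, Finset.mem_Icc]
      omega
    rw [hfil, Finset.sum_filter]
    exact Finset.sum_congr rfl fun k _ => by split_ifs <;> simp
  have hl2 : 2 ≤ l := by omega
  constructor
  · intro β hβ
    rcases hβ with ⟨a, ha1, hai, rfl⟩ | ⟨a, b, ha1, hai, hib, hbl, hβ⟩
    · refine ⟨fun k => (if k < a then 1 else 0) + (if i + 1 ≤ k then 1 else 0), ?_⟩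
      have hc : ∀ k ∈ Finset.Icc 1 l,
          ((((if k < a then 1 else 0) + (if i + 1 ≤ k then 1 else 0) : ℕ) : ℝ)) • α k
          = ((if 1 ≤ k then (1 : ℝ) else 0) + (if i + 1 ≤ k then (1 : ℝ) else 0)
              - (if a ≤ k then (1 : ℝ) else 0)) • α k := by
        intro k hk
        simp only [Finset.mem_Icc] at hk
        congr 1
        push_cast
        split_ifs <;> first | (exfalso; omega) | norm_num
      rw [Finset.sum_congr rfl hc]
      simp only [sub_smul, add_smul]
      rw [Finset.sum_sub_distrib, Finset.sum_add_distrib,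
        ← key 1 le_rfl (by omega), ← key (i + 1) (by omega) (by omega),
        ← key a ha1 (by omega)]
    · rcases hβ with rfl | rfl
      · refine ⟨fun k => (if k < a then 1 else 0) + (if i + 1 ≤ k then 1 else 0)
          + (if b ≤ k then 1 else 0), ?_⟩
        have hc : ∀ k ∈ Finset.Icc 1 l,
            ((((if k < a then 1 else 0) + (if i + 1 ≤ k then 1 else 0)
                + (if b ≤ k then 1 else 0) : ℕ) : ℝ)) • α k
            = ((if 1 ≤ k then (1 : ℝ) else 0) + (if i + 1 ≤ k then (1 : ℝ) else 0)
                - (if a ≤ k then (1 : ℝ) else 0)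
                + (if b ≤ k then (1 : ℝ) else 0)) • α k := by
          intro k hk
          simp only [Finset.mem_Icc] at hk
          congr 1
          push_cast
          split_ifs <;> first | (exfalso; omega) | norm_num
        rw [Finset.sum_congr rfl hc]
        simp only [sub_smul, add_smul]
        rw [Finset.sum_add_distrib, Finset.sum_sub_distrib, Finset.sum_add_distrib,
          ← key 1 le_rfl (by omega), ← key (i + 1) (by omega) (by omega),
          ← key a ha1 (by omega), ← key b (by omega) hbl]
        abel
      · refine ⟨fun k => (if k < a then 1 else 0)
          + (if i + 1 ≤ k ∧ k < b then 1 else 0), ?_⟩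
        have hc : ∀ k ∈ Finset.Icc 1 l,
            ((((if k < a then 1 else 0)
                + (if i + 1 ≤ k ∧ k < b then 1 else 0) : ℕ) : ℝ)) • α k
            = ((if 1 ≤ k then (1 : ℝ) else 0) + (if i + 1 ≤ k then (1 : ℝ) else 0)
                - (if a ≤ k then (1 : ℝ) else 0)
                - (if b ≤ k then (1 : ℝ) else 0)) • α k := by
          intro k hk
          simp only [Finset.mem_Icc] at hk
          congr 1
          push_cast
          split_ifs <;> first | (exfalso; omega) | norm_num
        rw [Finset.sum_congr rfl hc]
        simp only [sub_smul, add_smul]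
        rw [Finset.sum_sub_distrib, Finset.sum_sub_distrib, Finset.sum_add_distrib,
          ← key 1 le_rfl (by omega), ← key (i + 1) (by omega) (by omega),
          ← key a ha1 (by omega), ← key b (by omega) hbl]
        abel
  · have h11 := hip 1 1 le_rfl (by omega) le_rfl (by omega)
    have h1i := hip 1 (i + 1) le_rfl (by omega) (by omega) (by omega)
    have hi1' := hip (i + 1) 1 (by omega) (by omega) le_rfl (by omega)
    have hii := hip (i + 1) (i + 1) (by omega) (by omega) (by omega) (by omega)
    have hne : (1 : ℕ) ≠ i + 1 := by omega
    rw [if_pos rfl] at h11 hii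
    rw [if_neg hne] at h1i
    rw [if_neg (Ne.symm hne)] at hi1'
    rw [inner_add_left, inner_add_right, inner_add_right, h11, h1i, hi1', hii]
    have hl0 : (2 : ℝ) * (l : ℝ) - 1 ≠ 0 := by
      have : (2 : ℝ) ≤ (l : ℝ) := by exact_mod_cast hl2
      nlinarith
    rw [add_zero, zero_add, ← add_div,
      div_eq_div_iff (by intro h; apply hl0; linarith) hl0]
    ring
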